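/- arXiv:2203.13171 — 3 statements merged into one kernel-verified Lean document; each statement's English description precedes it below -/
import Mathlib

section
/- Let $Z_A, X_A, D_B, E_B$ be self-adjoint operators (on Hilbert spaces $H_A$, $H_B$ respectively) satisfying $Z_A^2 = P_A$, $X_A^2 = Q_A$, $D_B^2 = P_B$, $E_B^2 = Q_B$ for projections $P_A,Q_A,P_B,Q_B$. Then the operator identity holds: $\sqrt{2}\big[\tfrac{1}{\sqrt{2}}(P_A\otimes 1 + Q_A \otimes 1 + 1\otimes P_B + 1 \otimes Q_B) - Z_A\otimes(D_B+E_B) - X_A\otimes(D_B-E_B)\big] = (Z_A\otimes 1 - 1\otimes\tfrac{D_B+E_B}{\sqrt{2}})^2 + (X_A\otimes 1 - 1\otimes\tfrac{D_B-E_B}{\sqrt{2}})^2$. -/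
open Matrix Kronecker

noncomputable section

private theorem kron_sub_right' {m n : Type*} [Fintype m] [Fintype n]
    (A : Matrix m m ℂ) (B C : Matrix n n ℂ) :
    A ⊗ₖ (B - C) = A ⊗ₖ B - A ⊗ₖ C := by
  ext ⟨i, j⟩ ⟨k, l⟩
  simp [Matrix.kroneckerMap_apply, Matrix.sub_apply, mul_sub]

private theorem sos_core' {m n : Type*} [Fintype m] [Fintype n]
    [DecidableEq m] [DecidableEq n]
    (ZA XA : Matrix m m ℂ) (DB EB : Matrix n n ℂ)
    (PA QA : Matrix m m ℂ) (PB QB : Matrix n n ℂ)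
    (hZ2 : ZA * ZA = PA) (hX2 : XA * XA = QA)
    (hD2 : DB * DB = PB) (hE2 : EB * EB = QB)
    (t s : ℂ) (hts : t = 2 * s) (hss : s * s = 2⁻¹) :
    t •
      (s • (PA ⊗ₖ (1 : Matrix n n ℂ) + QA ⊗ₖ 1 + (1 : Matrix m m ℂ) ⊗ₖ PB
          + (1 : Matrix m m ℂ) ⊗ₖ QB)
        - ZA ⊗ₖ (DB + EB) - XA ⊗ₖ (DB - EB)) =
      (ZA ⊗ₖ (1 : Matrix n n ℂ)
          - s • ((1 : Matrix m m ℂ) ⊗ₖ (DB + EB))) ^ 2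
      + (XA ⊗ₖ (1 : Matrix n n ℂ)
          - s • ((1 : Matrix m m ℂ) ⊗ₖ (DB - EB))) ^ 2 := by
  have h1 : (DB + EB) * (DB + EB) = PB + QB + (DB*EB + EB*DB) := by
    rw [← hD2, ← hE2]; noncomm_ring
  have h2 : (DB - EB) * (DB - EB) = PB + QB - (DB*EB + EB*DB) := by
    rw [← hD2, ← hE2]; noncomm_ring
  subst hts
  rw [pow_two, pow_two]
  simp only [Matrix.sub_mul, Matrix.mul_sub, Matrix.smul_mul, Matrix.mul_smul,
    ← Matrix.mul_kronecker_mul, Matrix.one_mul, Matrix.mul_one, hZ2, hX2, h1, h2,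
    smul_smul]
  simp only [Matrix.kronecker_add, kron_sub_right', smul_add, smul_sub]
  match_scalars <;> first
    | ring1
    | linear_combination 2 * hss

/-- Sum-of-squares decomposition of the shifted Bell operator (Eq. (A16)). -/
theorem sos_decomposition {m n : Type*} [Fintype m] [Fintype n]
    [DecidableEq m] [DecidableEq n]
    (ZA XA : Matrix m m ℂ) (DB EB : Matrix n n ℂ)
    (PA QA : Matrix m m ℂ) (PB QB : Matrix n n ℂ)
    (hZA : ZAᴴ = ZA) (hXA : XAᴴ = XA) (hDB : DBᴴ = DB) (hEB : EBᴴ = EB)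
    (hPA : PAᴴ = PA) (hPA2 : PA * PA = PA)
    (hQA : QAᴴ = QA) (hQA2 : QA * QA = QA)
    (hPB : PBᴴ = PB) (hPB2 : PB * PB = PB)
    (hQB : QBᴴ = QB) (hQB2 : QB * QB = QB)
    (hZ2 : ZA * ZA = PA) (hX2 : XA * XA = QA)
    (hD2 : DB * DB = PB) (hE2 : EB * EB = QB) :
    (Real.sqrt 2 : ℂ) •
      (((Real.sqrt 2 : ℂ))⁻¹ • (PA ⊗ₖ (1 : Matrix n n ℂ) + QA ⊗ₖ 1 + (1 : Matrix m m ℂ) ⊗ₖ PB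
          + (1 : Matrix m m ℂ) ⊗ₖ QB)
        - ZA ⊗ₖ (DB + EB) - XA ⊗ₖ (DB - EB)) =
      (ZA ⊗ₖ (1 : Matrix n n ℂ)
          - ((Real.sqrt 2 : ℂ))⁻¹ • ((1 : Matrix m m ℂ) ⊗ₖ (DB + EB))) ^ 2
      + (XA ⊗ₖ (1 : Matrix n n ℂ)
          - ((Real.sqrt 2 : ℂ))⁻¹ • ((1 : Matrix m m ℂ) ⊗ₖ (DB - EB))) ^ 2 := by
  have ht : (Real.sqrt 2 : ℂ) * (Real.sqrt 2 : ℂ) = 2 := by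
    norm_cast
    exact_mod_cast Real.mul_self_sqrt (by norm_num)
  have ht0 : (Real.sqrt 2 : ℂ) ≠ 0 := by
    simp only [ne_eq, Complex.ofReal_eq_zero]
    exact Real.sqrt_ne_zero'.mpr (by norm_num : (0:ℝ) < 2)
  have hss : (Real.sqrt 2 : ℂ)⁻¹ * (Real.sqrt 2 : ℂ)⁻¹ = 2⁻¹ := by
    rw [← mul_inv, ht]
  have h2s : (Real.sqrt 2 : ℂ) = 2 * (Real.sqrt 2 : ℂ)⁻¹ := by
    rw [eq_comm, mul_inv_eq_iff_eq_mul₀ ht0, ht]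
  exact sos_core' ZA XA DB EB PA QA PB QB hZ2 hX2 hD2 hE2 _ _ h2s hss
end
end

section
/- Let $\psi \in H_A\otimes H_B$ and let $\{M_j\}_{j=0}^2$ and $\{P_k\}_{k=0}^2$ be PVMs on $H_A$ and $H_B$ respectively. Suppose $Z_A = \sum_j \omega^j M_j$ and $Z_B = \sum_k \omega^k P_k$ (with $\omega = e^{2\pi i /3}$) satisfy $(Z_A\otimes 1)\psi = (1\otimes Z_B)\psi$. Then for all $j,k$: $(M_j\otimes P_k)\psi = \delta_{jk}(M_j\otimes 1)\psi$. -/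
open Matrix Kronecker

noncomputable section

/-- Eq. (A49): if `Z_A = Σⱼ ωʲ Mⱼ` and `Z_B = Σₖ ωᵏ Pₖ` agree on `ψ`, then for the
two PVMs the outcomes are perfectly correlated on `ψ`:
`(Mⱼ ⊗ Pₖ)ψ = δⱼₖ (Mⱼ ⊗ 1)ψ`. -/
theorem pvm_delta_correlation {m n : Type*} [Fintype m] [Fintype n]
    [DecidableEq m] [DecidableEq n]
    (ψ : m × n → ℂ) (M : Fin 3 → Matrix m m ℂ) (P : Fin 3 → Matrix n n ℂ)
    (hMh : ∀ j, (M j)ᴴ = M j) (hM2 : ∀ j, M j * M j = M j)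
    (hMorth : ∀ j j', j ≠ j' → M j * M j' = 0) (hMsum : ∑ j, M j = 1)
    (hPh : ∀ k, (P k)ᴴ = P k) (hP2 : ∀ k, P k * P k = P k)
    (hPorth : ∀ k k', k ≠ k' → P k * P k' = 0) (hPsum : ∑ k, P k = 1)
    (ω : ℂ) (hω : ω = Complex.exp (2 * Real.pi * Complex.I / 3))
    (hZ : ((∑ j : Fin 3, ω ^ (j : ℕ) • M j) ⊗ₖ (1 : Matrix n n ℂ)).mulVec ψ
        = ((1 : Matrix m m ℂ) ⊗ₖ (∑ k : Fin 3, ω ^ (k : ℕ) • P k)).mulVec ψ) :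
    ∀ j k, (M j ⊗ₖ P k).mulVec ψ
        = if j = k then (M j ⊗ₖ (1 : Matrix n n ℂ)).mulVec ψ else 0 := by
  have hprm : IsPrimitiveRoot ω 3 := by
    rw [hω]
    have := Complex.isPrimitiveRoot_exp 3 (by norm_num)
    simpa using this
  have key : ∀ a b : Fin 3, a ≠ b → (M a ⊗ₖ P b).mulVec ψ = 0 := by
    intro a b hab
    have h1 := congrArg (fun v => (M a ⊗ₖ P b).mulVec v) hZ
    simp only [Matrix.mulVec_mulVec] at h1
    have hL : (M a ⊗ₖ P b) * ((∑ j : Fin 3, ω ^ (j:ℕ) • M j) ⊗ₖ (1 : Matrix n n ℂ))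
        = ω ^ (a:ℕ) • (M a ⊗ₖ P b) := by
      have e1 : (∑ j : Fin 3, ω ^ (j:ℕ) • M j) ⊗ₖ (1 : Matrix n n ℂ)
          = ∑ j : Fin 3, ω ^ (j:ℕ) • (M j ⊗ₖ (1 : Matrix n n ℂ)) := by
        simp [Fin.sum_univ_three, add_kronecker, smul_kronecker]
      rw [e1, Finset.mul_sum, Finset.sum_eq_single a]
      · rw [Matrix.mul_smul, ← mul_kronecker_mul, hM2, Matrix.mul_one]
      · intro j _ hj
        rw [Matrix.mul_smul, ← mul_kronecker_mul, hMorth a j (Ne.symm hj),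
          Matrix.zero_kronecker, smul_zero]
      · simp
    have hR : (M a ⊗ₖ P b) * ((1 : Matrix m m ℂ) ⊗ₖ (∑ k : Fin 3, ω ^ (k:ℕ) • P k))
        = ω ^ (b:ℕ) • (M a ⊗ₖ P b) := by
      have e1 : (1 : Matrix m m ℂ) ⊗ₖ (∑ k : Fin 3, ω ^ (k:ℕ) • P k)
          = ∑ k : Fin 3, ω ^ (k:ℕ) • ((1 : Matrix m m ℂ) ⊗ₖ P k) := by
        simp [Fin.sum_univ_three, kronecker_add, smul_kronecker, kronecker_smul]
      rw [e1, Finset.mul_sum, Finset.sum_eq_single b]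
      · rw [Matrix.mul_smul, ← mul_kronecker_mul, hP2, Matrix.mul_one]
      · intro k _ hk
        rw [Matrix.mul_smul, ← mul_kronecker_mul, hPorth b k (Ne.symm hk),
          Matrix.kronecker_zero, smul_zero]
      · simp
    rw [hL, hR] at h1
    have hne : ω ^ (a:ℕ) ≠ ω ^ (b:ℕ) := fun h =>
      hab (Fin.ext (hprm.pow_inj a.isLt b.isLt h))
    have h2 : (ω ^ (a:ℕ) - ω ^ (b:ℕ)) • (M a ⊗ₖ P b).mulVec ψ = 0 := by
      rw [sub_smul, ← Matrix.smul_mulVec, ← Matrix.smul_mulVec, h1, sub_self]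
    rcases smul_eq_zero.mp h2 with h3 | h3
    · exact absurd (sub_eq_zero.mp h3) hne
    · exact h3
  intro j k
  split
  · subst ‹j = k›
    have e1 : (M j ⊗ₖ (1 : Matrix n n ℂ)) = ∑ k : Fin 3, M j ⊗ₖ P k := by
      rw [← hPsum]
      simp [Fin.sum_univ_three, kronecker_add]
    rw [e1]
    have e2 : (∑ k : Fin 3, M j ⊗ₖ P k).mulVec ψ = ∑ k : Fin 3, (M j ⊗ₖ P k).mulVec ψ := by
      simp [Fin.sum_univ_three, Matrix.add_mulVec]
    rw [e2, Finset.sum_eq_single j]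
    · intro k _ hk
      exact key j k (Ne.symm hk)
    · simp
  · exact key j k ‹j ≠ k›
end
end

section
/- Let $H_A, H_B$ be finite-dimensional Hilbert spaces, $\psi \in H_A\otimes H_B$ a unit vector, $\{M_j\}_{j=0}^{2}$ a PVM on $H_A$ and $\{P_k\}_{k=0}^2$ a PVM on $H_B$ satisfying $(M_j\otimes P_k)\psi = \delta_{jk}(M_j\otimes 1)\psi$ and $\|(M_j\otimes 1)\psi\| = 1/\sqrt{3}$ for all $j$. Let $U_1^A, U_2^A$ be unitaries on $H_A$ and $U_1^B, U_2^B$ unitaries on $H_B$ with $(U_j^A M_j \otimes U_j^B P_j)\psi = (M_0\otimes 1)\psi$ for $j=1,2$. Then the vector $\Phi(\psi) := \sum_{j,k} (U_j^A M_j\otimes U_k^B P_k)\psi \otimes |j\rangle|k\rangle$ (with $U_0 = 1$) equals $\sqrt{3}\,(M_0\otimes 1)\psi \otimes |\phi_+\rangle$ where $|\phi_+\rangle = (|00\rangle+|11\rangle+|22\rangle)/\sqrt{3} \in \mathbb{C}^3\otimes\mathbb{C}^3$, and $\sqrt{3}\,(M_0\otimes 1)\psi$ is a unit vector. -/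
open Matrix Kronecker

noncomputable section

/-- The maximally entangled two-qutrit state `|φ₊⟩ = (|00⟩+|11⟩+|22⟩)/√3`. -/
def phiPlus : Fin 3 × Fin 3 → ℂ := fun p => if p.1 = p.2 then (Real.sqrt 3 : ℂ)⁻¹ else 0

/-- Abstract form of the final step (Eq. (A58)) of the self-testing isometry: the
isometry output factorizes as a junk state tensored with `|φ₊⟩`. -/
theorem isometry_output_factorizes {m n : Type*} [Fintype m] [Fintype n]
    [DecidableEq m] [DecidableEq n]
    (ψ : m × n → ℂ) (hψ : star ψ ⬝ᵥ ψ = 1)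
    (M : Fin 3 → Matrix m m ℂ) (P : Fin 3 → Matrix n n ℂ)
    (hMh : ∀ j, (M j)ᴴ = M j) (hM2 : ∀ j, M j * M j = M j)
    (hMorth : ∀ j j', j ≠ j' → M j * M j' = 0) (hMsum : ∑ j, M j = 1)
    (hPh : ∀ k, (P k)ᴴ = P k) (hP2 : ∀ k, P k * P k = P k)
    (hPorth : ∀ k k', k ≠ k' → P k * P k' = 0) (hPsum : ∑ k, P k = 1)
    (hdelta : ∀ j k, (M j ⊗ₖ P k).mulVec ψ
        = if j = k then (M j ⊗ₖ (1 : Matrix n n ℂ)).mulVec ψ else 0)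
    (hnorm : ∀ j, star ((M j ⊗ₖ (1 : Matrix n n ℂ)).mulVec ψ)
        ⬝ᵥ (M j ⊗ₖ (1 : Matrix n n ℂ)).mulVec ψ = 1 / 3)
    (U : Fin 3 → Matrix m m ℂ) (V : Fin 3 → Matrix n n ℂ)
    (hU : ∀ j, U j * (U j)ᴴ = 1 ∧ (U j)ᴴ * U j = 1)
    (hV : ∀ k, V k * (V k)ᴴ = 1 ∧ (V k)ᴴ * V k = 1)
    (hU0 : U 0 = 1) (hV0 : V 0 = 1)
    (hraise : ∀ j, j ≠ 0 →
      ((U j * M j) ⊗ₖ (V j * P j)).mulVec ψ = (M 0 ⊗ₖ (1 : Matrix n n ℂ)).mulVec ψ) :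
    ((fun x : (m × n) × (Fin 3 × Fin 3) =>
        ∑ j : Fin 3, ∑ k : Fin 3,
          ((U j * M j) ⊗ₖ (V k * P k)).mulVec ψ x.1 * (if x.2 = (j, k) then 1 else 0))
      = fun x => (Real.sqrt 3 : ℂ) * (M 0 ⊗ₖ (1 : Matrix n n ℂ)).mulVec ψ x.1
          * phiPlus x.2) ∧
    star ((Real.sqrt 3 : ℂ) • (M 0 ⊗ₖ (1 : Matrix n n ℂ)).mulVec ψ)
      ⬝ᵥ ((Real.sqrt 3 : ℂ) • (M 0 ⊗ₖ (1 : Matrix n n ℂ)).mulVec ψ) = 1 := by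
  have h3 : (Real.sqrt 3 : ℂ) ≠ 0 := by
    simp [Complex.ofReal_ne_zero, Real.sqrt_ne_zero']
  have key : ∀ j k : Fin 3, ((U j * M j) ⊗ₖ (V k * P k)).mulVec ψ
      = if j = k then (M 0 ⊗ₖ (1 : Matrix n n ℂ)).mulVec ψ else 0 := by
    intro j k
    by_cases h : j = k
    · subst h
      rw [if_pos rfl]
      by_cases h0 : j = 0
      · subst h0
        rw [hU0, hV0, one_mul, one_mul, hdelta 0 0, if_pos rfl]
      · exact hraise j h0
    · rw [if_neg h, Matrix.mul_kronecker_mul, ← Matrix.mulVec_mulVec, hdelta, if_neg h,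
        Matrix.mulVec_zero]
  constructor
  · funext x
    obtain ⟨y, a, b⟩ := x
    simp only [key, phiPlus, Fin.sum_univ_three]
    have h33 : (Real.sqrt 3 : ℂ) * (Real.sqrt 3 : ℂ) = 3 := by
      rw [← Complex.ofReal_mul, Real.mul_self_sqrt (by norm_num)]
      norm_num
    fin_cases a <;> fin_cases b <;>
      simp_all [Prod.ext_iff, Pi.zero_apply] <;>
      field_simp <;> ring
  · rw [star_smul, smul_dotProduct, dotProduct_smul, hnorm 0]
    have : star (Real.sqrt 3 : ℂ) = (Real.sqrt 3 : ℂ) := by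
      simp [Complex.star_def, Complex.conj_ofReal]
    rw [this, smul_eq_mul, smul_eq_mul, ← mul_assoc, ← Complex.ofReal_mul,
      Real.mul_self_sqrt (by norm_num)]
    norm_num
end
end
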